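/- Let f ∈ ℂ[X] be a nonzero polynomial, n ∈ ℕ, and let φ_0, …, φ_n ∈ ℂ[X] be polynomials with deg φ_k = k for each k and ⟨φ_j · f, φ_k · f⟩ = δ_{jk} (Kronecker delta) for all 0 ≤ j, k ≤ n. Then the degree-n OPA p_n to 1/f satisfies p_n = conj(f(0)) · ∑_{k=0}^n conj(φ_k(0)) · φ_k. -/

import Mathlib

open Polynomial

/-- The H² inner product of two polynomials: `⟨g, h⟩ = ∑ₖ gₖ conj(hₖ)`. -/
noncomputable def hinner (g h : Polynomial ℂ) : ℂ :=
  ∑ᶠ k : ℕ, g.coeff k * (starRingEnd ℂ) (h.coeff k)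

/-- The squared H² norm of a polynomial: `‖g‖² = ∑ₖ |gₖ|²`. -/
noncomputable def hnormSq (g : Polynomial ℂ) : ℝ :=
  ∑ᶠ k : ℕ, ‖g.coeff k‖ ^ 2

/-- `p` is the degree-`n` optimal polynomial approximant (OPA) to `1/f` in H². -/
def IsOPA (f : Polynomial ℂ) (n : ℕ) (p : Polynomial ℂ) : Prop :=
  p.degree ≤ (n : ℕ) ∧
    ∀ q : Polynomial ℂ, q.degree ≤ (n : ℕ) → hnormSq (1 - p * f) ≤ hnormSq (1 - q * f)

namespace OPAProof
noncomputable def Tmap (N : ℕ) : Polynomial ℂ →ₗ[ℂ] EuclideanSpace ℂ (Fin N) where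
  toFun g := WithLp.toLp 2 (fun i => g.coeff i)
  map_add' g h := by ext i; simp
  map_smul' c g := by ext i; simp

lemma Tmap_apply (N : ℕ) (g : Polynomial ℂ) (i : Fin N) : Tmap N g i = g.coeff i := rfl

lemma hinner_eq_sum {N : ℕ} {g : Polynomial ℂ} (hg : g.natDegree < N) (h : Polynomial ℂ) :
    hinner g h = ∑ k ∈ Finset.range N, g.coeff k * (starRingEnd ℂ) (h.coeff k) := by
  apply finsum_eq_finset_sum_of_support_subset
  intro k hk
  simp only [Function.mem_support] at hk
  simp only [Finset.coe_range, Set.mem_Iio]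
  by_contra hkN
  push_neg at hkN
  exact hk (by rw [Polynomial.coeff_eq_zero_of_natDegree_lt (lt_of_lt_of_le hg hkN)]; ring)

lemma hnormSq_eq_sum {N : ℕ} {g : Polynomial ℂ} (hg : g.natDegree < N) :
    hnormSq g = ∑ k ∈ Finset.range N, ‖g.coeff k‖ ^ 2 := by
  apply finsum_eq_finset_sum_of_support_subset
  intro k hk
  simp only [Function.mem_support] at hk
  simp only [Finset.coe_range, Set.mem_Iio]
  by_contra hkN
  push_neg at hkN
  exact hk (by rw [Polynomial.coeff_eq_zero_of_natDegree_lt (lt_of_lt_of_le hg hkN)]; simp)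

lemma inner_Tmap {N : ℕ} (g : Polynomial ℂ) {h : Polynomial ℂ} (hh : h.natDegree < N) :
    (inner ℂ (Tmap N g) (Tmap N h) : ℂ) = hinner h g := by
  rw [hinner_eq_sum hh g, ← Fin.sum_univ_eq_sum_range]
  simp [PiLp.inner_apply, RCLike.inner_apply, Tmap_apply, mul_comm]

lemma norm_Tmap_sq {N : ℕ} {g : Polynomial ℂ} (hg : g.natDegree < N) :
    ‖Tmap N g‖ ^ 2 = hnormSq g := by
  rw [hnormSq_eq_sum hg, ← Fin.sum_univ_eq_sum_range, EuclideanSpace.norm_eq,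
    Real.sq_sqrt (by positivity)]
  simp [Tmap_apply]

lemma Tmap_inj {N : ℕ} {g h : Polynomial ℂ} (hg : g.natDegree < N) (hh : h.natDegree < N)
    (he : Tmap N g = Tmap N h) : g = h := by
  ext k
  by_cases hk : k < N
  · exact congrFun (congrArg WithLp.ofLp he) ⟨k, hk⟩
  · push_neg at hk
    rw [coeff_eq_zero_of_natDegree_lt (lt_of_lt_of_le hg hk),
      coeff_eq_zero_of_natDegree_lt (lt_of_lt_of_le hh hk)]

lemma mem_span_of_degree_le (n : ℕ) (φ : ℕ → Polynomial ℂ)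
    (hdeg : ∀ k ≤ n, (φ k).degree = (k : ℕ)) :
    ∀ q : Polynomial ℂ, q.degree ≤ (n : ℕ) →
      q ∈ Submodule.span ℂ (φ '' Set.Iic n) := by
  suffices H : ∀ d : ℕ, ∀ q : Polynomial ℂ, q.natDegree ≤ d → q.degree ≤ (n : ℕ) →
      q ∈ Submodule.span ℂ (φ '' Set.Iic n) by
    exact fun q hq => H q.natDegree q le_rfl hq
  intro d
  induction d using Nat.strong_induction_on with
  | _ d IH =>
    intro q hqd hqn
    by_cases hq0 : q = 0
    · simp [hq0]
    have hm : q.natDegree ≤ n := natDegree_le_iff_degree_le.mpr hqn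
    set m := q.natDegree with hm'
    have hφm : (φ m).degree = (m : ℕ) := hdeg m hm
    have hφm0 : φ m ≠ 0 := fun h => by simp [h] at hφm
    have hlc : (φ m).leadingCoeff ≠ 0 := leadingCoeff_ne_zero.mpr hφm0
    set c : ℂ := q.leadingCoeff / (φ m).leadingCoeff with hc
    have hc0 : c ≠ 0 := div_ne_zero (leadingCoeff_ne_zero.mpr hq0) hlc
    have hdegCm : (Polynomial.C c * φ m).degree = (m : ℕ) := by
      rw [degree_C_mul hc0, hφm]
    have hlceq : (Polynomial.C c * φ m).leadingCoeff = q.leadingCoeff := by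
      rw [leadingCoeff_mul, leadingCoeff_C, hc, div_mul_cancel₀ _ hlc]
    have hsub : (q - Polynomial.C c * φ m).degree < q.degree :=
      degree_sub_lt (by rw [hdegCm, degree_eq_natDegree hq0]) hq0 hlceq.symm
    have hmem_m : φ m ∈ Submodule.span ℂ (φ '' Set.Iic n) :=
      Submodule.subset_span ⟨m, hm, rfl⟩
    have key : q = (q - Polynomial.C c * φ m) + c • φ m := by
      rw [Polynomial.smul_eq_C_mul]; ring
    by_cases hr0 : q - Polynomial.C c * φ m = 0
    · rw [key, hr0, zero_add]
      exact Submodule.smul_mem _ _ hmem_m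
    · have hrd : (q - Polynomial.C c * φ m).natDegree < m := by
        rw [natDegree_lt_iff_degree_lt hr0]
        rw [degree_eq_natDegree hq0] at hsub
        exact hsub
      have hrn : (q - Polynomial.C c * φ m).degree ≤ (n : ℕ) := by
        rw [degree_eq_natDegree hq0] at hsub
        calc (q - Polynomial.C c * φ m).degree ≤ (m : ℕ) := le_of_lt hsub
          _ ≤ (n : ℕ) := by exact_mod_cast hm
      have hrmem := IH (q - Polynomial.C c * φ m).natDegree
        (lt_of_lt_of_le hrd hqd) _ le_rfl hrn
      rw [key]
      exact Submodule.add_mem _ hrmem (Submodule.smul_mem _ _ hmem_m)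

end OPAProof


open OPAProof in
theorem opa_eq_kernel_sum (f : Polynomial ℂ) (hf : f ≠ 0) (n : ℕ)
    (φ : ℕ → Polynomial ℂ) (hdeg : ∀ k ≤ n, (φ k).degree = (k : ℕ))
    (horth : ∀ j ≤ n, ∀ k ≤ n,
      hinner (φ j * f) (φ k * f) = if j = k then 1 else 0)
    (p : Polynomial ℂ) (hp : IsOPA f n p) :
    p = Polynomial.C ((starRingEnd ℂ) (f.eval 0)) *
      ∑ k ∈ Finset.range (n + 1), Polynomial.C ((starRingEnd ℂ) ((φ k).eval 0)) * φ k := by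
  classical
  set N := n + f.natDegree + 1 with hN
  set a : ℂ := (starRingEnd ℂ) (f.eval 0) with ha
  set b : ℕ → ℂ := fun k => (starRingEnd ℂ) ((φ k).eval 0) with hb
  set P : Polynomial ℂ :=
    Polynomial.C a * ∑ k ∈ Finset.range (n + 1), Polynomial.C (b k) * φ k with hP
  -- degree bounds
  have hdf : ∀ q : Polynomial ℂ, q.degree ≤ (n : ℕ) → (q * f).natDegree < N := by
    intro q hq
    calc (q * f).natDegree ≤ q.natDegree + f.natDegree := natDegree_mul_le
      _ ≤ n + f.natDegree := by
          exact add_le_add_left (natDegree_le_iff_degree_le.mpr hq) _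
      _ < N := Nat.lt_succ_self _
  have hone : (1 : Polynomial ℂ).natDegree < N := by simp [hN]
  have hsubdeg : ∀ q : Polynomial ℂ, q.degree ≤ (n : ℕ) → (1 - q * f).natDegree < N := by
    intro q hq
    calc (1 - q * f).natDegree ≤ max (1 : Polynomial ℂ).natDegree (q * f).natDegree :=
        natDegree_sub_le _ _
      _ < N := max_lt hone (hdf q hq)
  have hφdeg : ∀ k : Fin (n + 1), (φ (k : ℕ)).degree ≤ (n : ℕ) := by
    intro k
    rw [hdeg k k.is_le]
    exact_mod_cast k.is_le
  -- orthonormal family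
  set e : Fin (n + 1) → EuclideanSpace ℂ (Fin N) := fun k => Tmap N (φ (k : ℕ) * f) with he'
  have he : ∀ j k : Fin (n + 1), (inner ℂ (e j) (e k) : ℂ) = if j = k then 1 else 0 := by
    intro j k
    rw [he']
    rw [inner_Tmap _ (hdf (φ (k : ℕ)) (hφdeg k))]
    rw [horth (k : ℕ) k.is_le (j : ℕ) j.is_le]
    simp [Fin.ext_iff, eq_comm]
  set K := Submodule.span ℂ (Set.range e) with hK
  have hmemK : ∀ q : Polynomial ℂ, q.degree ≤ (n : ℕ) → Tmap N (q * f) ∈ K := by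
    intro q hq
    have hq' := mem_span_of_degree_le n φ hdeg q hq
    set M : Polynomial ℂ →ₗ[ℂ] EuclideanSpace ℂ (Fin N) :=
      (Tmap N).comp (LinearMap.mulRight ℂ f) with hM
    have h1 : Tmap N (q * f) = M q := rfl
    rw [h1]
    have h2 : M q ∈ Submodule.map M (Submodule.span ℂ (φ '' Set.Iic n)) :=
      Submodule.mem_map_of_mem hq'
    rw [Submodule.map_span] at h2
    refine Submodule.span_mono ?_ h2
    rintro _ ⟨_, ⟨k, hk, rfl⟩, rfl⟩
    exact ⟨⟨k, Nat.lt_succ_of_le hk⟩, rfl⟩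
  have hPdeg : P.degree ≤ (n : ℕ) := by
    rw [hP]
    refine (degree_mul_le _ _).trans ?_
    have h2 : (∑ k ∈ Finset.range (n + 1), Polynomial.C (b k) * φ k).degree ≤ (n : ℕ) := by
      refine (Polynomial.degree_sum_le _ _).trans ?_
      refine Finset.sup_le fun k hk => ?_
      have hk' : k ≤ n := Nat.lt_succ_iff.mp (Finset.mem_range.mp hk)
      calc (Polynomial.C (b k) * φ k).degree ≤ (Polynomial.C (b k)).degree + (φ k).degree :=
          degree_mul_le _ _
        _ ≤ 0 + (φ k).degree := add_le_add_left degree_C_le _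
        _ = (φ k).degree := by rw [zero_add]
        _ = (k : ℕ) := hdeg k hk'
        _ ≤ (n : ℕ) := by exact_mod_cast hk'
    calc (Polynomial.C a).degree + (∑ k ∈ Finset.range (n + 1),
          Polynomial.C (b k) * φ k).degree ≤ 0 + (n : ℕ) := add_le_add degree_C_le h2
      _ = (n : ℕ) := by rw [zero_add]
  set x : EuclideanSpace ℂ (Fin N) := Tmap N 1 with hx'
  set y : EuclideanSpace ℂ (Fin N) := Tmap N (P * f) with hy'
  have hPf : P * f = ∑ k ∈ Finset.range (n + 1), (a * b k) • (φ k * f) := by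
    rw [hP, Finset.mul_sum, Finset.sum_mul]
    refine Finset.sum_congr rfl fun k _ => ?_
    rw [Polynomial.smul_eq_C_mul, Polynomial.C_mul]
    ring
  have hy : y = ∑ k : Fin (n + 1), (a * b (k : ℕ)) • e k := by
    rw [hy', hPf, Fin.sum_univ_eq_sum_range (fun k => (a * b k) • (Tmap N (φ k * f)))]
    rw [map_sum]
    refine Finset.sum_congr rfl fun k _ => ?_
    rw [map_smul]
  have hyK : y ∈ K := by rw [hy']; exact hmemK P hPdeg
  have hej : ∀ j : Fin (n + 1), (inner ℂ (e j) (x - y) : ℂ) = 0 := by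
    intro j
    rw [inner_sub_right]
    have hxj : (inner ℂ (e j) x : ℂ) = (starRingEnd ℂ) ((φ (j : ℕ) * f).coeff 0) := by
      rw [he', hx', inner_Tmap _ hone, hinner_eq_sum hone]
      rw [Finset.sum_eq_single 0]
      · simp
      · intro k _ hk0; simp [Polynomial.coeff_one, hk0]
      · intro h0; exact absurd (Finset.mem_range.mpr (by omega)) h0
    have hyj : (inner ℂ (e j) y : ℂ) = a * b (j : ℕ) := by
      rw [hy, inner_sum]
      simp only [inner_smul_right, he]
      rw [Finset.sum_eq_single j]
      · simp
      · intro k _ hk; simp [if_neg (Ne.symm hk)]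
      · intro h; exact absurd (Finset.mem_univ j) h
    rw [hxj, hyj, Polynomial.mul_coeff_zero, Polynomial.coeff_zero_eq_eval_zero,
      Polynomial.coeff_zero_eq_eval_zero, map_mul, ha, hb]
    ring
  have hr : ∀ v ∈ K, (inner ℂ v (x - y) : ℂ) = 0 := by
    intro v hv
    induction hv using Submodule.span_induction with
    | mem v hv => obtain ⟨j, rfl⟩ := hv; exact hej j
    | zero => exact inner_zero_left _
    | add u w _ _ hu hw => rw [inner_add_left, hu, hw, add_zero]
    | smul c u _ hu => rw [inner_smul_left, hu, mul_zero]
  have hpyth : ∀ u ∈ K, ‖x - u‖ ^ 2 = ‖x - y‖ ^ 2 + ‖y - u‖ ^ 2 := by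
    intro u hu
    have h0 : (inner ℂ (y - u) (x - y) : ℂ) = 0 := hr _ (Submodule.sub_mem _ hyK hu)
    have h1 : (inner ℂ (x - y) (y - u) : ℂ) = 0 := by
      rw [← inner_conj_symm, h0, map_zero]
    have hdecomp : x - u = (x - y) + (y - u) := by abel
    rw [hdecomp, @norm_add_sq ℂ _ _ _ _ (x - y) (y - u), h1]
    simp
  have hLpK : Tmap N (p * f) ∈ K := hmemK p hp.1
  have hconv : ∀ q : Polynomial ℂ, q.degree ≤ (n : ℕ) →
      hnormSq (1 - q * f) = ‖x - Tmap N (q * f)‖ ^ 2 := by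
    intro q hq
    rw [← norm_Tmap_sq (hsubdeg q hq), map_sub]
  have h1 : ‖x - Tmap N (p * f)‖ ^ 2 ≤ ‖x - y‖ ^ 2 := by
    rw [← hconv p hp.1, hy', ← hconv P hPdeg]
    exact hp.2 P hPdeg
  have h2 := hpyth (Tmap N (p * f)) hLpK
  have h5 : ‖y - Tmap N (p * f)‖ = 0 := by
    nlinarith [norm_nonneg (y - Tmap N (p * f))]
  have h4 : y = Tmap N (p * f) := by
    rwa [norm_eq_zero, sub_eq_zero] at h5
  rw [hy'] at h4
  have h6 : P * f = p * f := Tmap_inj (hdf P hPdeg) (hdf p hp.1) h4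
  exact (mul_right_cancel₀ hf h6).symm
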